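/- Let g ∈ ℝ^d, H ∈ ℝ^{d×d} symmetric with λ_min(H) < 0, σ > 0, ν ∈ (0,1], and let u ∈ ℝ^d satisfy ⟨u, H u⟩ ≤ ν λ_min(H)‖u‖² < 0. Define m(s) = ⟨g, s⟩ + (1/2)⟨s, H s⟩ + (σ/3)‖s‖³ and s^E = α u where α = argmin over α̂ ∈ ℝ of m(α̂ u). Then -m(s^E) ≥ (ν|λ_min(H)|/6) · max{‖s^E‖², ν²|λ_min(H)|²/σ²}. -/

import Mathlib

open scoped InnerProductSpace

set_option maxHeartbeats 1000000 in
/-- Descent bound for the negative-curvature (eigen) direction of the cubic-regularized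
model.  Here `lam` plays the role of `λ_min(H)`: it is a lower bound on the Rayleigh
quotient of `H` which is attained. -/
theorem cubic_eigen_decrease {d : ℕ}
    (g : EuclideanSpace ℝ (Fin d))
    (H : EuclideanSpace ℝ (Fin d) →L[ℝ] EuclideanSpace ℝ (Fin d))
    (hH : IsSelfAdjoint H)
    (lam : ℝ)
    (hlow : ∀ v : EuclideanSpace ℝ (Fin d), lam * ‖v‖ ^ 2 ≤ ⟪v, H v⟫_ℝ)
    (hach : ∃ v : EuclideanSpace ℝ (Fin d), v ≠ 0 ∧ ⟪v, H v⟫_ℝ = lam * ‖v‖ ^ 2)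
    (hlam : lam < 0)
    (σ ν : ℝ) (hσ : 0 < σ) (hν0 : 0 < ν) (hν1 : ν ≤ 1)
    (u : EuclideanSpace ℝ (Fin d))
    (hu : ⟪u, H u⟫_ℝ ≤ ν * lam * ‖u‖ ^ 2) (hu0 : ν * lam * ‖u‖ ^ 2 < 0)
    (m : EuclideanSpace ℝ (Fin d) → ℝ)
    (hm : ∀ s, m s = ⟪g, s⟫_ℝ + (1 / 2) * ⟪s, H s⟫_ℝ + σ / 3 * ‖s‖ ^ 3)
    (α : ℝ) (hmin : ∀ β : ℝ, m (α • u) ≤ m (β • u)) :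
    -(m (α • u)) ≥ ν * |lam| / 6 * max (‖α • u‖ ^ 2) (ν ^ 2 * lam ^ 2 / σ ^ 2) := by
  set a := ⟪g, u⟫_ℝ with ha
  set b := ⟪u, H u⟫_ℝ with hb
  have hun : 0 < ‖u‖ := by
    rcases (norm_nonneg u).lt_or_eq with h | h
    · exact h
    · exfalso; rw [← h] at hu0; simp at hu0
  have hb0 : b < 0 := lt_of_le_of_lt hu hu0
  -- formula for the model along the line spanned by u
  have hmβ : ∀ β : ℝ, m (β • u) = β * a + 1 / 2 * (β ^ 2 * b) + σ / 3 * (|β| * ‖u‖) ^ 3 := by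
    intro β
    rw [hm]
    simp only [map_smul, real_inner_smul_left, real_inner_smul_right, norm_smul,
      Real.norm_eq_abs, ← ha, ← hb]
    ring
  -- Step 1: ⟨g, s⟩ ≤ 0
  have h1 : α * a ≤ 0 := by
    have h := hmin (-α)
    rw [hmβ, hmβ, abs_neg] at h
    nlinarith [h]
  -- Step 2: the minimum value is negative, hence α ≠ 0
  have hmneg : m (α • u) < 0 := by
    set ε := -b / (σ * ‖u‖ ^ 3) with hε
    have hεpos : 0 < ε := div_pos (neg_pos.mpr hb0) (by positivity)
    have hkey : σ * ε * ‖u‖ ^ 3 = -b := by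
      rw [hε]; field_simp
    have hval : σ / 3 * (ε * ‖u‖) ^ 3 = ε ^ 2 * (-b) / 3 := by
      linear_combination (ε ^ 2 / 3) * hkey
    have h2 := hmin ε
    have h3 := hmin (-ε)
    rw [hmβ ε, abs_of_pos hεpos] at h2
    rw [hmβ (-ε), abs_neg, abs_of_pos hεpos] at h3
    nlinarith [mul_pos hεpos hεpos, hb0, hval]
  have hα : α ≠ 0 := by
    intro h
    rw [h, hmβ] at hmneg
    simp at hmneg
  -- set up notation
  set t := ‖α • u‖ with htdef
  have ht_eq : t = |α| * ‖u‖ := by rw [htdef, norm_smul, Real.norm_eq_abs]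
  have ht : 0 < t := by
    rw [ht_eq]; exact mul_pos (abs_pos.mpr hα) hun
  have ht2 : t ^ 2 = α ^ 2 * ‖u‖ ^ 2 := by
    rw [ht_eq, mul_pow, sq_abs]
  -- Step 3: first-order optimality via local minimum at c = 1 of the cubic polynomial
  set A := α * a with hA
  set B := 1 / 2 * (α ^ 2 * b) with hB
  set C := σ / 3 * t ^ 3 with hC
  set f : ℝ → ℝ := fun c => A * c + B * c ^ 2 + C * c ^ 3 with hf
  have hf1 : f 1 = m (α • u) := by
    rw [hmβ]; simp only [hf, hA, hB, hC, ht_eq]; ring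
  have hfc : ∀ c : ℝ, 0 < c → f c = m ((c * α) • u) := by
    intro c hc
    rw [hmβ]
    simp only [hf, hA, hB, hC, ht_eq, abs_mul, abs_of_pos hc]
    ring
  have hloc : IsLocalMin f 1 := by
    filter_upwards [Ioi_mem_nhds (by norm_num : (0:ℝ) < 1)] with c hc
    rw [hf1, hfc c hc]
    exact hmin _
  have hd : HasDerivAt f (A + 2 * B + 3 * C) 1 := by
    have h1' : HasDerivAt (fun c : ℝ => c) 1 1 := hasDerivAt_id 1
    have h2' : HasDerivAt (fun c : ℝ => c ^ 2) (2 * 1) 1 := by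
      simpa using hasDerivAt_pow 2 (1 : ℝ)
    have h3' : HasDerivAt (fun c : ℝ => c ^ 3) (3 * 1 ^ 2) 1 := by
      simpa using hasDerivAt_pow 3 (1 : ℝ)
    have := ((h1'.const_mul A).add (h2'.const_mul B)).add (h3'.const_mul C)
    convert this using 1
    · rfl
    · rfl
    · rfl
    ring
  have hFOC : A + 2 * B + 3 * C = 0 := by
    have h := hloc.deriv_eq_zero
    rw [hd.deriv] at h
    exact h
  -- hFOC : α*a + α^2*b + σ*t^3 = 0
  have hFOC' : α * a + α ^ 2 * b + σ * t ^ 3 = 0 := by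
    rw [hA, hB, hC] at hFOC; linarith
  -- Step 4: bounds
  have hbt : α ^ 2 * b ≤ ν * lam * t ^ 2 := by
    rw [ht2]
    calc α ^ 2 * b ≤ α ^ 2 * (ν * lam * ‖u‖ ^ 2) := by
          exact mul_le_mul_of_nonneg_left hu (sq_nonneg α)
      _ = ν * lam * (α ^ 2 * ‖u‖ ^ 2) := by ring
  have hσt : σ * t ^ 3 ≥ -(α ^ 2 * b) := by linarith
  have hσt2 : σ * t ^ 3 ≥ ν * (-lam) * t ^ 2 := by nlinarith
  have htlb : σ * t ≥ ν * (-lam) := by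
    nlinarith [sq_nonneg t, mul_pos ht ht]
  have hmax : max (t ^ 2) (ν ^ 2 * lam ^ 2 / σ ^ 2) = t ^ 2 := by
    apply max_eq_left
    rw [div_le_iff₀ (by positivity)]
    have h0 : 0 ≤ ν * (-lam) := mul_nonneg hν0.le (by linarith)
    have hsq : (ν * (-lam)) ^ 2 ≤ (σ * t) ^ 2 := pow_le_pow_left₀ h0 htlb 2
    nlinarith [hsq]
  rw [hmax, abs_of_neg hlam, hmβ, ← ht_eq]
  linarith [hbt, hσt, hFOC']
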